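/- Let M ⊆ ℤ[ω] be a sublattice of prime index ℓ with Minkowski reduced basis {v, w}, where at least one of the principal ideals (v), (w) of ℤ[ω] is not divisible by a prime ideal over ℓ. Then (v) and (w) are coprime ideals of ℤ[ω] (they share no prime ideal factor). -/

import Mathlib

/-- The primitive cube root of unity `ω = e^{2πi/3}`. -/
noncomputable def ω : ℂ := Complex.exp (2 * Real.pi * Complex.I / 3)

/-- The Eisenstein integers `ℤ[ω]` as a subring of `ℂ`. -/
noncomputable def EisR : Subring ℂ := Subring.closure {ω}

/-- `{v, w}` is a Minkowski reduced basis of the plane lattice `M`. -/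
def IsReducedBasis (M : AddSubgroup ℂ) (v w : ℂ) : Prop :=
  v ∈ M ∧ w ∈ M ∧ LinearIndependent ℝ ![v, w] ∧
  M = AddSubgroup.closure {v, w} ∧
  (∀ u ∈ M, u ≠ 0 → ‖v‖ ≤ ‖u‖) ∧
  (∀ u ∈ M, LinearIndependent ℝ ![v, u] → ‖w‖ ≤ ‖u‖)

lemma cos23 : Real.cos (2 * Real.pi / 3) = -(1/2) := by
  rw [show (2 * Real.pi / 3 : ℝ) = Real.pi - Real.pi/3 by ring, Real.cos_pi_sub,
    Real.cos_pi_div_three]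

lemma sin23 : Real.sin (2 * Real.pi / 3) = Real.sqrt 3 / 2 := by
  rw [show (2 * Real.pi / 3 : ℝ) = Real.pi - Real.pi/3 by ring, Real.sin_pi_sub,
    Real.sin_pi_div_three]

lemma omega_eq : ω = Complex.mk (-(1/2)) (Real.sqrt 3 / 2) := by
  have h : (2 * (Real.pi:ℂ) * Complex.I / 3) = ((2 * Real.pi / 3 : ℝ) : ℂ) * Complex.I := by
    push_cast; ring
  rw [ω, h, Complex.exp_mul_I, ← Complex.ofReal_cos, ← Complex.ofReal_sin, cos23, sin23]
  apply Complex.ext <;> simp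

lemma omega_re : ω.re = -(1/2) := by rw [omega_eq]
lemma omega_im : ω.im = Real.sqrt 3 / 2 := by rw [omega_eq]

lemma omega_mem : ω ∈ EisR := Subring.subset_closure rfl

lemma eis_mem (a b : ℤ) : (a : ℂ) + (b : ℂ) * ω ∈ EisR :=
  add_mem (intCast_mem EisR a) (mul_mem (intCast_mem EisR b) omega_mem)

set_option maxHeartbeats 1000000 in
lemma exists_near (z : ℂ) : ∃ q ∈ EisR, ‖z - q‖ < 1 := by
  have h3 : Real.sqrt 3 * Real.sqrt 3 = 3 := Real.mul_self_sqrt (by norm_num)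
  have h3pos : (0:ℝ) < Real.sqrt 3 := Real.sqrt_pos.mpr (by norm_num)
  set β : ℝ := 2 * z.im / Real.sqrt 3 with hβ
  set α : ℝ := z.re + z.im / Real.sqrt 3 with hα
  refine ⟨((round α : ℤ) : ℂ) + ((round β : ℤ) : ℂ) * ω, eis_mem _ _, ?_⟩
  set s : ℝ := α - round α with hs
  set t : ℝ := β - round β with ht
  have hsb : |s| ≤ 1/2 := abs_sub_round α
  have htb : |t| ≤ 1/2 := abs_sub_round β
  have hre : (z - (((round α : ℤ) : ℂ) + ((round β : ℤ) : ℂ) * ω)).re = s - t/2 := by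
    simp [Complex.sub_re, Complex.add_re, Complex.mul_re, omega_re, omega_im, hs, ht, hα, hβ]
    field_simp
    ring
  have him : (z - (((round α : ℤ) : ℂ) + ((round β : ℤ) : ℂ) * ω)).im = t * (Real.sqrt 3 / 2) := by
    simp [Complex.sub_im, Complex.add_im, Complex.mul_im, omega_re, omega_im, hs, ht, hα, hβ]
    field_simp
  have hsq : ‖z - (((round α : ℤ) : ℂ) + ((round β : ℤ) : ℂ) * ω)‖ ^ 2
      = (s - t/2)^2 + (t * (Real.sqrt 3/2))^2 := by
    rw [Complex.sq_norm, Complex.normSq_apply, hre, him]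
    ring
  have hlt : (s - t/2)^2 + (t * (Real.sqrt 3/2))^2 < 1 := by
    have h1 : s ≤ 1/2 := (abs_le.mp hsb).2
    have h2 : -(1/2) ≤ s := (abs_le.mp hsb).1
    have h4 : t ≤ 1/2 := (abs_le.mp htb).2
    have h5 : -(1/2) ≤ t := (abs_le.mp htb).1
    have he : (t * (Real.sqrt 3/2))^2 = 3/4 * t^2 := by rw [mul_pow]; rw [div_pow]; nlinarith [h3]
    rw [he]
    nlinarith [sq_nonneg (s+t), sq_nonneg (s-t)]
  have habs := norm_nonneg (z - (((round α : ℤ) : ℂ) + ((round β : ℤ) : ℂ) * ω))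
  nlinarith [hsq, hlt, habs]

/-- Let `M ⊆ ℤ[ω]` be a sublattice of prime index `ℓ` with Minkowski reduced
basis `{v, w}`, and suppose at least one of the principal ideals `(v)`, `(w)`
of `ℤ[ω]` is not divisible by a prime over `ℓ` (since `ℤ[ω]` is a PID, prime
ideals over `ℓ` are generated by prime elements `π ∣ ℓ`).  Then `(v)` and
`(w)` share no prime ideal factor, i.e. `v` and `w` are coprime in `ℤ[ω]`. -/
theorem reduced_basis_coprime (ℓ : ℕ) (hℓ : ℓ.Prime)
    (M : AddSubgroup ℂ) (hM : M ≤ EisR.toAddSubgroup)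
    (hidx : (M.addSubgroupOf EisR.toAddSubgroup).index = ℓ)
    (v w : ℂ) (hv : v ∈ EisR) (hw : w ∈ EisR)
    (hred : IsReducedBasis M v w)
    (hnd : (¬ ∃ π : EisR, Prime π ∧ π ∣ (ℓ : EisR) ∧ π ∣ ⟨v, hv⟩) ∨
           (¬ ∃ π : EisR, Prime π ∧ π ∣ (ℓ : EisR) ∧ π ∣ ⟨w, hw⟩)) :
    IsCoprime (⟨v, hv⟩ : EisR) (⟨w, hw⟩ : EisR) := by
  obtain ⟨hvM, hwM, hind, hMgen, hmin, -⟩ := hred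
  have hvne : v ≠ 0 := by simpa using hind.ne_zero 0
  set v' : EisR := (⟨v, hv⟩ : EisR) with hv'def
  set w' : EisR := (⟨w, hw⟩ : EisR) with hw'def
  set I : Ideal EisR := Ideal.span {v', w'} with hIdef
  have hvI : v' ∈ I := Ideal.subset_span (by simp)
  have hwI : w' ∈ I := Ideal.subset_span (by simp)
  set J : AddSubgroup EisR := I.toAddSubgroup with hJdef
  -- every element of M gives an element of I
  have key : ∀ z ∈ AddSubgroup.closure {v, w}, ∃ h : z ∈ EisR, (⟨z, h⟩ : EisR) ∈ I := by
    intro z hz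
    induction hz using AddSubgroup.closure_induction with
    | mem x hx =>
      rcases hx with rfl | rfl
      · exact ⟨hv, hvI⟩
      · exact ⟨hw, hwI⟩
    | zero => exact ⟨zero_mem _, zero_mem _⟩
    | add x y hx hy ihx ihy =>
      obtain ⟨h1, m1⟩ := ihx; obtain ⟨h2, m2⟩ := ihy
      exact ⟨add_mem h1 h2, add_mem m1 m2⟩
    | neg x hx ihx =>
      obtain ⟨h1, m1⟩ := ihx
      exact ⟨neg_mem h1, neg_mem m1⟩
  have hNJ : M.addSubgroupOf EisR.toAddSubgroup ≤ J := by
    intro x hx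
    have hxM : (x : ℂ) ∈ M := hx
    rw [hMgen] at hxM
    obtain ⟨h, hmem⟩ := key _ hxM
    exact hmem
  have hJdvd : J.index ∣ ℓ := hidx ▸ AddSubgroup.index_dvd_of_le hNJ
  rcases hℓ.eq_one_or_self_of_dvd _ hJdvd with hcase | hcase
  · -- J = ⊤, so 1 ∈ I and v', w' are coprime
    have hJtop : J = ⊤ := AddSubgroup.index_eq_one.mp hcase
    have h1I : (1 : EisR) ∈ I := by
      have : (1 : EisR) ∈ J := hJtop ▸ AddSubgroup.mem_top 1
      exact this
    rw [hIdef, Ideal.mem_span_pair] at h1I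
    obtain ⟨a, b, hab⟩ := h1I
    exact ⟨a, b, hab⟩
  · -- J has index ℓ, derive a contradiction with hnd
    exfalso
    have hJN : J ≤ M.addSubgroupOf EisR.toAddSubgroup := by
      have hrel := AddSubgroup.relIndex_mul_index hNJ
      rw [hidx, hcase] at hrel
      have : (M.addSubgroupOf EisR.toAddSubgroup).relIndex J = 1 :=
        Nat.eq_of_mul_eq_mul_right hℓ.pos (by rw [hrel, one_mul])
      exact AddSubgroup.relIndex_eq_one.mp this
    have hIM : ∀ x : EisR, x ∈ I → (x : ℂ) ∈ M := fun x hx => hJN hx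
    have hlI : ((ℓ : ℕ) : EisR) ∈ I := by
      have := AddSubgroup.nsmul_index_mem J 1
      rw [hcase] at this
      exact (show ((ℓ : ℕ) : EisR) ∈ J by simpa [nsmul_eq_mul] using this)
    -- I = (v')
    have hspan : I = Ideal.span {v'} := by
      apply le_antisymm
      · intro x hx
        rw [Ideal.mem_span_singleton]
        obtain ⟨q, hqE, hq⟩ := exists_near ((x : ℂ) / v)
        set r : EisR := x - ⟨q, hqE⟩ * v' with hrdef
        have hrI : r ∈ I := I.sub_mem hx (I.mul_mem_left _ hvI)
        have hrM : (r : ℂ) ∈ M := hIM r hrI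
        have hrval : (r : ℂ) = ((x : ℂ) / v - q) * v := by
          rw [hrdef]
          push_cast
          field_simp
          ring
        have hrabs : ‖(r : ℂ)‖ < ‖v‖ := by
          rw [hrval, norm_mul]
          calc ‖(x : ℂ)/v - q‖ * ‖v‖
              < 1 * ‖v‖ := by
                exact mul_lt_mul_of_pos_right hq (norm_pos_iff.mpr hvne)
            _ = ‖v‖ := one_mul _
        have hr0 : (r : ℂ) = 0 := by
          by_contra h0
          exact absurd (hmin _ hrM h0) (not_le.mpr hrabs)
        have hx' : x = ⟨q, hqE⟩ * v' := by
          have : r = 0 := Subtype.ext hr0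
          rw [hrdef] at this
          linear_combination (norm := module) this
        exact ⟨⟨q, hqE⟩, by rw [hx']; ring⟩
      · rw [Ideal.span_le]
        simpa using hvI
    have hItop : I ≠ ⊤ := by
      intro htop
      have : (1 : EisR) ∈ J := by
        show (1 : EisR) ∈ I
        rw [htop]; trivial
      have hJtop : J = ⊤ := by
        rw [eq_top_iff]
        intro x _
        show x ∈ I
        rw [htop]; trivial
      rw [hJtop, AddSubgroup.index_top] at hcase
      exact hℓ.ne_one hcase.symm
    have hmax : I.IsMaximal := by
      rw [Ideal.isMaximal_iff]
      constructor
      · intro h1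
        exact hItop ((Ideal.eq_top_iff_one I).mpr h1)
      · intro K x hIK hxI hxK
        set K' : AddSubgroup EisR := K.toAddSubgroup with hK'def
        have hJK : J ≤ K' := fun y hy => hIK hy
        have hK'dvd : K'.index ∣ ℓ := hcase ▸ AddSubgroup.index_dvd_of_le hJK
        rcases hℓ.eq_one_or_self_of_dvd _ hK'dvd with hc | hc
        · have : K' = ⊤ := AddSubgroup.index_eq_one.mp hc
          have : (1 : EisR) ∈ K' := this ▸ AddSubgroup.mem_top 1
          exact this
        · exfalso
          have hrel := AddSubgroup.relIndex_mul_index hJK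
          rw [hcase, hc] at hrel
          have : J.relIndex K' = 1 :=
            Nat.eq_of_mul_eq_mul_right hℓ.pos (by rw [hrel, one_mul])
          have hKJ : K' ≤ J := AddSubgroup.relIndex_eq_one.mp this
          exact hxI (hKJ hxK)
    have hv'ne : v' ≠ 0 := fun h => hvne (congrArg Subtype.val h)
    have hprime : Prime v' := by
      have hp := hmax.isPrime
      rw [hspan] at hp
      exact (Ideal.span_singleton_prime hv'ne).mp hp
    have hwdvd : v' ∣ w' := Ideal.mem_span_singleton.mp (hspan ▸ hwI)
    have hldvd : v' ∣ ((ℓ : ℕ) : EisR) := Ideal.mem_span_singleton.mp (hspan ▸ hlI)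
    rcases hnd with h | h
    · exact h ⟨v', hprime, hldvd, dvd_rfl⟩
    · exact h ⟨v', hprime, hldvd, hwdvd⟩
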